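/- arXiv:1309.1794 — 2 statements merged into one kernel-verified Lean document; each statement's English description precedes it below -/
import Mathlib

section
/- Let G be an undirected connected graph on nodes 1,…,N, let f, B, C satisfy the Assumption (OFP), and let xᵢ, kᵢⱼ be a continuously differentiable solution of the adaptively coupled system with xᵢ(t) ∈ X for all t in an interval [0,T). Then for all t ∈ [0,T), ∑_{i=1}^N x̃ᵢ(t)ᵀ·P·x̃ᵢ(t) ≤ V(0), where V(0) = ∑_{i=1}^N x̃ᵢ(0)ᵀ·P·x̃ᵢ(0) + ∑_{i=1}^N ∑_{j=1}^N (1/(2γᵢⱼ))·(kᵢⱼ(0) − k*ᵢⱼ)² for any fixed k* with 2·k*·λ₂ > θ, λ₂ the second-smallest eigenvalue of the Laplacian of G, and k*ᵢⱼ = k* on edges of G and 0 otherwise. In particular, the deviations x̃ᵢ(t) = xᵢ(t) − (1/N)∑ⱼxⱼ(t) are bounded on [0,T) with a bound depending only on the initial conditions and not on T. -/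
open Matrix



lemma spectral_gap {N : ℕ} (G : SimpleGraph (Fin N)) [DecidableRel G.Adj] (hG : G.Connected)
    (lam2 : ℝ)
    (hlam_min : ∀ μ : ℝ, (∃ v : Fin N → ℝ, v ≠ 0 ∧ (G.lapMatrix ℝ) *ᵥ v = μ • v) →
      μ = 0 ∨ lam2 ≤ μ)
    (w : Fin N → ℝ) (hw : ∑ i, w i = 0) :
    lam2 * (w ⬝ᵥ w) ≤ w ⬝ᵥ (G.lapMatrix ℝ *ᵥ w) := by
  have hH : (G.lapMatrix ℝ).IsHermitian := (SimpleGraph.posSemidef_lapMatrix ℝ G).1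
  set b := hH.eigenvectorBasis with hb
  set μ := hH.eigenvalues with hμ
  set W : EuclideanSpace ℝ (Fin N) := WithLp.toLp 2 w with hW
  have hrep : ∀ y : EuclideanSpace ℝ (Fin N),
      (inner ℝ W y : ℝ) = ∑ j, (inner ℝ W (b j) : ℝ) * (inner ℝ (b j) y : ℝ) :=
    fun y => (OrthonormalBasis.sum_inner_mul_inner b W y).symm
  have hinner_dot : ∀ u v : EuclideanSpace ℝ (Fin N), (inner ℝ u v : ℝ) = (u : Fin N → ℝ) ⬝ᵥ v := by
    intro u v
    simp [PiLp.inner_apply, dotProduct, mul_comm, RCLike.inner_apply]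
  have heig : ∀ j, (G.lapMatrix ℝ) *ᵥ ⇑(b j) = μ j • ⇑(b j) := fun j => hH.mulVec_eigenvectorBasis j
  have hzero : ∀ j, μ j = 0 → (inner ℝ (b j) W : ℝ) = 0 := by
    intro j hj
    have h0 : (G.lapMatrix ℝ) *ᵥ ⇑(b j) = 0 := by rw [heig j, hj, zero_smul]
    have hconst : ∀ i i' : Fin N, (b j : Fin N → ℝ) i = (b j : Fin N → ℝ) i' := by
      intro i i'
      have := (SimpleGraph.lapMatrix_mulVec_eq_zero_iff_forall_reachable G).mp h0
      exact this i i' (hG.preconnected i i')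
    obtain ⟨i0⟩ := hG.nonempty
    have : (inner ℝ (b j) W : ℝ) = (b j : Fin N → ℝ) i0 * ∑ i, w i := by
      rw [hinner_dot]
      simp only [dotProduct, Finset.mul_sum]
      exact Finset.sum_congr rfl fun i _ => by rw [hconst i i0]
    rw [this, hw, mul_zero]
  have hbW : ∀ j, (inner ℝ (b j) (WithLp.toLp 2 (G.lapMatrix ℝ *ᵥ w) : EuclideanSpace ℝ (Fin N)) : ℝ)
      = μ j * (inner ℝ (b j) W : ℝ) := by
    intro j
    rw [hinner_dot, hinner_dot]
    have hsymL : ⇑(b j) ᵥ* (G.lapMatrix ℝ) = (G.lapMatrix ℝ) *ᵥ ⇑(b j) := by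
      nth_rewrite 1 [← (SimpleGraph.isSymm_lapMatrix ℝ G).eq]
      exact Matrix.vecMul_transpose _ _
    calc (b j : Fin N → ℝ) ⬝ᵥ (G.lapMatrix ℝ *ᵥ w)
        = (⇑(b j) ᵥ* (G.lapMatrix ℝ)) ⬝ᵥ w := by rw [Matrix.dotProduct_mulVec]
      _ = ((G.lapMatrix ℝ) *ᵥ ⇑(b j)) ⬝ᵥ w := by rw [hsymL]
      _ = μ j * ((b j : Fin N → ℝ) ⬝ᵥ w) := by rw [heig j, smul_dotProduct, smul_eq_mul]
  have hLW : w ⬝ᵥ (G.lapMatrix ℝ *ᵥ w) = ∑ j, μ j * (inner ℝ (b j) W : ℝ) ^ 2 := by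
    rw [← hinner_dot W, hrep]
    refine Finset.sum_congr rfl fun j _ => ?_
    rw [hbW j, real_inner_comm W (b j)]
    ring
  have hWW : w ⬝ᵥ w = ∑ j, (inner ℝ (b j) W : ℝ) ^ 2 := by
    rw [← hinner_dot W W, hrep W]
    refine Finset.sum_congr rfl fun j _ => ?_
    rw [real_inner_comm W (b j)]; ring
  rw [hLW, hWW, Finset.mul_sum]
  refine Finset.sum_le_sum fun j _ => ?_
  have hbj : (b j : Fin N → ℝ) ≠ 0 := by
    intro hbj
    have h1 := b.orthonormal.1 j
    rw [show (b j : EuclideanSpace ℝ (Fin N)) = 0 from by simpa using hbj] at h1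
    simp at h1
  rcases hlam_min (μ j) ⟨⇑(b j), hbj, heig j⟩ with h0 | hle
  · rw [h0, hzero j h0]; simp
  · have : (0:ℝ) ≤ (inner ℝ (b j) W : ℝ) ^ 2 := sq_nonneg _
    nlinarith


lemma hasDerivAt_dot {m : ℕ} (c : Fin m → ℝ) {u : ℝ → (Fin m → ℝ)} {u' : Fin m → ℝ} {t : ℝ}
    (hu : HasDerivAt u u' t) : HasDerivAt (fun s => c ⬝ᵥ u s) (c ⬝ᵥ u') t := by
  have h := hasDerivAt_pi.mp hu
  simpa [dotProduct] using HasDerivAt.fun_sum (u := Finset.univ)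
    (fun i _ => ((h i).const_mul (c i)))

lemma hasDerivAt_quad {m : ℕ} (P : Matrix (Fin m) (Fin m) ℝ) {u : ℝ → Fin m → ℝ}
    {u' : Fin m → ℝ} {t : ℝ} (hu : HasDerivAt u u' t) :
    HasDerivAt (fun s => u s ⬝ᵥ (P *ᵥ u s)) (u' ⬝ᵥ (P *ᵥ u t) + u t ⬝ᵥ (P *ᵥ u')) t := by
  have h := hasDerivAt_pi.mp hu
  have key : ∀ i : Fin m, HasDerivAt (fun s => u s i * ((fun j => P i j) ⬝ᵥ u s))
      (u' i * ((fun j => P i j) ⬝ᵥ u t) + u t i * ((fun j => P i j) ⬝ᵥ u')) t :=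
    fun i => (h i).mul (hasDerivAt_dot _ hu)
  have e1 : (fun s => u s ⬝ᵥ (P *ᵥ u s))
      = fun s => ∑ i, u s i * ((fun j => P i j) ⬝ᵥ u s) := by
    funext s; simp [dotProduct, mulVec]
  have e2 : u' ⬝ᵥ (P *ᵥ u t) + u t ⬝ᵥ (P *ᵥ u')
      = ∑ i, (u' i * ((fun j => P i j) ⬝ᵥ u t) + u t i * ((fun j => P i j) ⬝ᵥ u')) := by
    simp [dotProduct, mulVec, Finset.sum_add_distrib]
  rw [e1, e2]
  exact HasDerivAt.fun_sum (fun i _ => key i)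

lemma ofp_segment {n pp : ℕ} (f : (Fin n → ℝ) → (Fin n → ℝ))
    (J : (Fin n → ℝ) → Matrix (Fin n) (Fin n) ℝ)
    (hf : ∀ z, HasFDerivAt f ((J z).mulVecLin.toContinuousLinearMap) z)
    (C : Matrix (Fin pp) (Fin n) ℝ)
    (X : Set (Fin n → ℝ)) (hX : Convex ℝ X) (θ : ℝ)
    (P : Matrix (Fin n) (Fin n) ℝ) (hPsym : Pᵀ = P)
    (hLMI : ∀ z ∈ X, ∀ v : Fin n → ℝ,
      v ⬝ᵥ ((P * J z + (J z)ᵀ * P) *ᵥ v) ≤ θ * ((C *ᵥ v) ⬝ᵥ (C *ᵥ v)))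
    (a b : Fin n → ℝ) (ha : a ∈ X) (hb : b ∈ X) :
    2 * ((a - b) ⬝ᵥ (P *ᵥ (f a - f b))) ≤ θ * ((C *ᵥ (a - b)) ⬝ᵥ (C *ᵥ (a - b))) := by
  set v := a - b with hv
  -- pointwise LMI consequence
  have hpt : ∀ z ∈ X, 2 * (v ⬝ᵥ (P *ᵥ (J z *ᵥ v))) ≤ θ * ((C *ᵥ v) ⬝ᵥ (C *ᵥ v)) := by
    intro z hz
    have h1 := hLMI z hz v
    have h2 : v ⬝ᵥ ((P * J z + (J z)ᵀ * P) *ᵥ v) = 2 * (v ⬝ᵥ (P *ᵥ (J z *ᵥ v))) := by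
      rw [Matrix.add_mulVec, dotProduct_add, ← Matrix.mulVec_mulVec, ← Matrix.mulVec_mulVec]
      have e1 : v ⬝ᵥ ((J z)ᵀ *ᵥ (P *ᵥ v)) = (J z *ᵥ v) ⬝ᵥ (P *ᵥ v) := by
        rw [Matrix.dotProduct_mulVec, Matrix.vecMul_transpose]
      have e2 : v ⬝ᵥ (P *ᵥ (J z *ᵥ v)) = (P *ᵥ v) ⬝ᵥ (J z *ᵥ v) := by
        rw [Matrix.dotProduct_mulVec]
        nth_rewrite 1 [← hPsym]
        rw [Matrix.vecMul_transpose]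
      rw [e1, e2, dotProduct_comm]
      ring
    linarith [h1, h2.ge]
  -- the function along the segment
  set g : ℝ → ℝ := fun s => 2 * (v ⬝ᵥ (P *ᵥ f (b + s • v))) with hg
  have hφ : ∀ s : ℝ, HasDerivAt (fun s : ℝ => b + s • v) v s := by
    intro s
    simpa using ((hasDerivAt_id s).smul_const v).const_add b
  have hgd : ∀ s : ℝ, HasDerivAt g (2 * (v ⬝ᵥ (P *ᵥ (J (b + s • v) *ᵥ v)))) s := by
    intro s
    have hfc : HasDerivAt (fun s : ℝ => f (b + s • v)) ((J (b + s • v)) *ᵥ v) s := by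
      have := (hf (b + s • v)).comp_hasDerivAt s (hφ s)
      exact this
    have : HasDerivAt (fun s : ℝ => (v ᵥ* P) ⬝ᵥ f (b + s • v)) ((v ᵥ* P) ⬝ᵥ ((J (b + s • v)) *ᵥ v)) s :=
      hasDerivAt_dot _ hfc
    have h2 := this.const_mul (2:ℝ)
    simpa [hg, Matrix.dotProduct_mulVec] using h2
  have hmem : ∀ s : ℝ, s ∈ Set.Icc (0:ℝ) 1 → b + s • v ∈ X := by
    rintro s ⟨h0, h1⟩
    have h2 := hX hb ha (by linarith : (0:ℝ) ≤ 1 - s) h0 (by ring)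
    have e : (1-s) • b + s • a = b + s • v := by
      rw [hv]; ext i
      simp only [Pi.add_apply, Pi.smul_apply, Pi.sub_apply, smul_eq_mul]
      ring
    rwa [e] at h2
  -- monotone argument
  set M := θ * ((C *ᵥ v) ⬝ᵥ (C *ᵥ v)) with hM
  have hh : MonotoneOn (fun s => M * s - g s) (Set.Icc (0:ℝ) 1) := by
    apply monotoneOn_of_deriv_nonneg (convex_Icc 0 1)
    · exact (Continuous.continuousOn (by
        have : ∀ s, HasDerivAt (fun s => M * s - g s) (M - 2 * (v ⬝ᵥ (P *ᵥ (J (b + s • v) *ᵥ v)))) s :=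
          fun s => (by simpa using ((hasDerivAt_id s).const_mul M).fun_sub (hgd s))
        exact continuous_iff_continuousAt.mpr fun s => (this s).continuousAt))
    · intro s hs
      have hd : HasDerivAt (fun s => M * s - g s) (M - 2 * (v ⬝ᵥ (P *ᵥ (J (b + s • v) *ᵥ v)))) s := by
        simpa using ((hasDerivAt_id s).const_mul M).fun_sub (hgd s)
      exact hd.differentiableAt.differentiableWithinAt
    · intro s hs
      rw [interior_Icc] at hs
      have hd : HasDerivAt (fun s => M * s - g s) (M - 2 * (v ⬝ᵥ (P *ᵥ (J (b + s • v) *ᵥ v)))) s := by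
        simpa using ((hasDerivAt_id s).const_mul M).fun_sub (hgd s)
      rw [hd.deriv]
      have := hpt _ (hmem s ⟨le_of_lt hs.1, le_of_lt hs.2⟩)
      linarith
  have h01 := hh (Set.mem_Icc.mpr ⟨le_refl 0, zero_le_one⟩) (Set.mem_Icc.mpr ⟨zero_le_one, le_refl 1⟩) zero_le_one
  have hg0 : g 0 = 2 * (v ⬝ᵥ (P *ᵥ f b)) := by simp [hg]
  have hg1 : g 1 = 2 * (v ⬝ᵥ (P *ᵥ f a)) := by
    have : b + (1:ℝ) • v = a := by rw [hv]; ext i; simp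
    rw [hg]; simp only [this]
  have : 2 * (v ⬝ᵥ (P *ᵥ (f a - f b))) = g 1 - g 0 := by
    rw [hg0, hg1, Matrix.mulVec_sub, dotProduct_sub]; ring
  rw [this]
  simp only [mul_zero, mul_one] at h01
  linarith [h01]


lemma sum_dotProduct' {ι : Type*} {m : ℕ} (s : Finset ι) (g : ι → Fin m → ℝ) (v : Fin m → ℝ) :
    ∑ i ∈ s, g i ⬝ᵥ v = (∑ i ∈ s, g i) ⬝ᵥ v := by
  simp only [dotProduct, Finset.sum_apply, Finset.sum_mul]
  exact Finset.sum_comm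

lemma dotProduct_sum' {ι : Type*} {m : ℕ} (s : Finset ι) (v : Fin m → ℝ) (g : ι → Fin m → ℝ) :
    ∑ i ∈ s, v ⬝ᵥ g i = v ⬝ᵥ (∑ i ∈ s, g i) := by
  simp only [dotProduct, Finset.sum_apply, Finset.mul_sum]
  exact Finset.sum_comm

lemma mulVec_sum' {ι : Type*} {m q : ℕ} (s : Finset ι) (C : Matrix (Fin q) (Fin m) ℝ)
    (g : ι → Fin m → ℝ) : C *ᵥ (∑ i ∈ s, g i) = ∑ i ∈ s, C *ᵥ g i := by
  ext c
  simp only [mulVec, Finset.sum_apply]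
  exact (dotProduct_sum' s _ g).symm


lemma deriv_nonpos {n pp N : ℕ}
    (G : SimpleGraph (Fin N)) [DecidableRel G.Adj] (hG : G.Connected)
    (f : (Fin n → ℝ) → (Fin n → ℝ))
    (J : (Fin n → ℝ) → Matrix (Fin n) (Fin n) ℝ)
    (hf : ∀ z, HasFDerivAt f ((J z).mulVecLin.toContinuousLinearMap) z)
    (B : Matrix (Fin n) (Fin pp) ℝ) (C : Matrix (Fin pp) (Fin n) ℝ)
    (X : Set (Fin n → ℝ)) (hX : Convex ℝ X)
    (θ : ℝ) (hθ : 0 < θ)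
    (P : Matrix (Fin n) (Fin n) ℝ) (hPsym : Pᵀ = P)
    (hLMI : ∀ z ∈ X, ∀ v : Fin n → ℝ,
      v ⬝ᵥ ((P * J z + (J z)ᵀ * P) *ᵥ v) ≤ θ * ((C *ᵥ v) ⬝ᵥ (C *ᵥ v)))
    (hPB : P * B = Cᵀ)
    (lam2 : ℝ)
    (hlam_min : ∀ μ : ℝ, (∃ v : Fin N → ℝ, v ≠ 0 ∧ (G.lapMatrix ℝ) *ᵥ v = μ • v) →
      μ = 0 ∨ lam2 ≤ μ)
    (kstar : ℝ) (hkstar_pos : 0 < kstar) (hkb : θ ≤ 2 * kstar * lam2)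
    (γ : Fin N → Fin N → ℝ) (hγpos : ∀ i j, G.Adj i j → 0 < γ i j)
    (a : Fin N → (Fin n → ℝ)) (haX : ∀ i, a i ∈ X)
    (κ : Fin N → Fin N → ℝ) (hκsym : ∀ i j, κ i j = κ j i)
    (hκ0 : ∀ i j, ¬ G.Adj i j → κ i j = 0)
    (F : Fin N → (Fin n → ℝ))
    (hF : ∀ i, F i = f (a i) + B *ᵥ (∑ j, κ i j • (C *ᵥ a j - C *ᵥ a i))) :
    (∑ i, ((F i - (N:ℝ)⁻¹ • ∑ j, F j) ⬝ᵥ (P *ᵥ (a i - (N:ℝ)⁻¹ • ∑ j, a j))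
         + (a i - (N:ℝ)⁻¹ • ∑ j, a j) ⬝ᵥ (P *ᵥ (F i - (N:ℝ)⁻¹ • ∑ j, F j))))
    + ∑ i, ∑ j, (if G.Adj i j then
        (1/(2*γ i j)) * (2 * (κ i j - kstar) *
          (γ i j * ((C *ᵥ a i - C *ᵥ a j) ⬝ᵥ (C *ᵥ a i - C *ᵥ a j))))
      else 0) ≤ 0 := by
  obtain ⟨i0⟩ := hG.nonempty
  have hNpos : 0 < (N:ℝ) := by exact_mod_cast i0.pos
  have hNne : (N:ℝ) ≠ 0 := ne_of_gt hNpos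
  set m : Fin n → ℝ := (N:ℝ)⁻¹ • ∑ j, a j with hm
  set mF : Fin n → ℝ := (N:ℝ)⁻¹ • ∑ j, F j with hmF
  set Y : Fin N → Fin pp → ℝ := fun i => C *ᵥ (a i - m) with hY
  have hsumU : ∑ i, (a i - m) = 0 := by
    rw [Finset.sum_sub_distrib, Finset.sum_const, Finset.card_univ, Fintype.card_fin,
      sub_eq_zero, ← Nat.cast_smul_eq_nsmul ℝ, hm, smul_smul, mul_inv_cancel₀ hNne, one_smul]
  have hmX : m ∈ X := by
    have hrw : m = ∑ i : Fin N, (N:ℝ)⁻¹ • a i := by rw [hm, Finset.smul_sum]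
    rw [hrw]
    refine hX.sum_mem (fun i _ => by positivity) ?_ (fun i _ => haX i)
    rw [Finset.sum_const, Finset.card_univ, Fintype.card_fin, nsmul_eq_mul,
      mul_inv_cancel₀ hNne]
  have hsymdot : ∀ d w : Fin n → ℝ, d ⬝ᵥ (P *ᵥ w) = w ⬝ᵥ (P *ᵥ d) := by
    intro d w
    rw [Matrix.dotProduct_mulVec]
    nth_rewrite 1 [← hPsym]
    rw [Matrix.vecMul_transpose, dotProduct_comm]
  have hCdiff : ∀ i j : Fin N, C *ᵥ a i - C *ᵥ a j = Y i - Y j := by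
    intro i j
    rw [hY]
    simp only [Matrix.mulVec_sub]
    abel
  -- Step 1 : quadratic part = 2 ∑ (aᵢ-m)ᵀ P Fᵢ
  have hS1 : (∑ i, ((F i - mF) ⬝ᵥ (P *ᵥ (a i - m)) + (a i - m) ⬝ᵥ (P *ᵥ (F i - mF))))
      = 2 * ∑ i, ((a i - m) ⬝ᵥ (P *ᵥ F i)) := by
    have e1 : ∀ i : Fin N, (F i - mF) ⬝ᵥ (P *ᵥ (a i - m)) + (a i - m) ⬝ᵥ (P *ᵥ (F i - mF))
        = 2 * ((a i - m) ⬝ᵥ (P *ᵥ (F i - mF))) := by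
      intro i; rw [hsymdot (F i - mF) (a i - m)]; ring
    rw [Finset.sum_congr rfl fun i _ => e1 i]
    have e2 : ∑ i, ((a i - m) ⬝ᵥ (P *ᵥ (F i - mF)))
        = ∑ i, ((a i - m) ⬝ᵥ (P *ᵥ F i)) - ∑ i, ((a i - m) ⬝ᵥ (P *ᵥ mF)) := by
      simp only [Matrix.mulVec_sub, dotProduct_sub, Finset.sum_sub_distrib]
    have e3 : ∑ i, ((a i - m) ⬝ᵥ (P *ᵥ mF)) = 0 := by
      rw [sum_dotProduct', hsumU, zero_dotProduct]
    rw [← Finset.mul_sum, e2, e3, sub_zero]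
  -- Step 2 : expand F
  have hS2 : ∑ i, ((a i - m) ⬝ᵥ (P *ᵥ F i))
      = ∑ i, ((a i - m) ⬝ᵥ (P *ᵥ f (a i)))
        + ∑ i, ∑ j, κ i j * (Y i ⬝ᵥ (Y j - Y i)) := by
    rw [← Finset.sum_add_distrib]
    refine Finset.sum_congr rfl fun i _ => ?_
    rw [hF i, Matrix.mulVec_add, dotProduct_add]
    congr 1
    rw [Matrix.mulVec_mulVec, hPB, Matrix.dotProduct_mulVec, Matrix.vecMul_transpose]
    have : C *ᵥ (a i - m) = Y i := rfl
    rw [this, ← dotProduct_sum']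
    refine Finset.sum_congr rfl fun j _ => ?_
    rw [hCdiff j i, dotProduct_smul, smul_eq_mul]
  -- Step 3 : coupling identity
  have hcoup : 2 * (∑ i, ∑ j, κ i j * (Y i ⬝ᵥ (Y j - Y i)))
      = - ∑ i, ∑ j, (if G.Adj i j then κ i j * ((Y i - Y j) ⬝ᵥ (Y i - Y j)) else 0) := by
    have swap : ∑ i, ∑ j, κ i j * (Y i ⬝ᵥ (Y j - Y i))
        = ∑ i, ∑ j, κ i j * (Y j ⬝ᵥ (Y i - Y j)) := by
      rw [Finset.sum_comm]
      exact Finset.sum_congr rfl fun i _ => Finset.sum_congr rfl fun j _ => by rw [hκsym j i]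
    have comb : ∀ i j : Fin N, κ i j * (Y i ⬝ᵥ (Y j - Y i)) + κ i j * (Y j ⬝ᵥ (Y i - Y j))
        = -(κ i j * ((Y i - Y j) ⬝ᵥ (Y i - Y j))) := by
      intro i j
      simp only [dotProduct_sub, sub_dotProduct]
      rw [dotProduct_comm (Y j) (Y i)]
      ring
    have hall : 2 * (∑ i, ∑ j, κ i j * (Y i ⬝ᵥ (Y j - Y i)))
        = ∑ i, ∑ j, -(κ i j * ((Y i - Y j) ⬝ᵥ (Y i - Y j))) := by
      rw [two_mul]
      nth_rewrite 2 [swap]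
      rw [← Finset.sum_add_distrib]
      refine Finset.sum_congr rfl fun i _ => ?_
      rw [← Finset.sum_add_distrib]
      exact Finset.sum_congr rfl fun j _ => comb i j
    rw [hall]
    have : ∀ i j : Fin N, -(κ i j * ((Y i - Y j) ⬝ᵥ (Y i - Y j)))
        = -(if G.Adj i j then κ i j * ((Y i - Y j) ⬝ᵥ (Y i - Y j)) else 0) := by
      intro i j
      by_cases hij : G.Adj i j
      · rw [if_pos hij]
      · rw [if_neg hij, hκ0 i j hij, zero_mul, neg_zero]
    rw [Finset.sum_congr rfl fun i _ => Finset.sum_congr rfl fun j _ => this i j]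
    simp only [Finset.sum_neg_distrib]
  -- Step 4 : K-term simplification
  have hKt : ∑ i, ∑ j, (if G.Adj i j then
        (1/(2*γ i j)) * (2 * (κ i j - kstar) *
          (γ i j * ((C *ᵥ a i - C *ᵥ a j) ⬝ᵥ (C *ᵥ a i - C *ᵥ a j))))
      else 0)
      = ∑ i, ∑ j, (if G.Adj i j then (κ i j - kstar) * ((Y i - Y j) ⬝ᵥ (Y i - Y j)) else 0) := by
    refine Finset.sum_congr rfl fun i _ => Finset.sum_congr rfl fun j _ => ?_
    by_cases hij : G.Adj i j
    · rw [if_pos hij, if_pos hij, hCdiff i j]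
      have hγ : γ i j ≠ 0 := (hγpos i j hij).ne'
      field_simp
    · rw [if_neg hij, if_neg hij]
  -- Step 5 : f-part bound
  have hfb : 2 * ∑ i, ((a i - m) ⬝ᵥ (P *ᵥ f (a i))) ≤ θ * ∑ i, (Y i ⬝ᵥ Y i) := by
    have hc0 : ∑ i, ((a i - m) ⬝ᵥ (P *ᵥ f m)) = 0 := by
      rw [sum_dotProduct', hsumU, zero_dotProduct]
    have expand : ∑ i, 2 * ((a i - m) ⬝ᵥ (P *ᵥ (f (a i) - f m)))
        = 2 * ∑ i, ((a i - m) ⬝ᵥ (P *ᵥ f (a i)))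
          - 2 * ∑ i, ((a i - m) ⬝ᵥ (P *ᵥ f m)) := by
      simp only [Matrix.mulVec_sub, dotProduct_sub, mul_sub, Finset.sum_sub_distrib,
        Finset.mul_sum]
    have sumle : ∑ i, 2 * ((a i - m) ⬝ᵥ (P *ᵥ (f (a i) - f m))) ≤ ∑ i, θ * (Y i ⬝ᵥ Y i) := by
      refine Finset.sum_le_sum fun i _ => ?_
      have := ofp_segment f J hf C X hX θ P hPsym hLMI (a i) m (haX i) hmX
      exact this
    rw [expand, hc0, mul_zero, sub_zero] at sumle
    rw [← Finset.mul_sum] at sumle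
    exact sumle
  -- Step 6 : Laplacian bound
  have hQ : 2 * lam2 * ∑ i, (Y i ⬝ᵥ Y i)
      ≤ ∑ i, ∑ j, (if G.Adj i j then ((Y i - Y j) ⬝ᵥ (Y i - Y j)) else 0) := by
    have hYsum : ∑ i, Y i = 0 := by
      have : ∑ i, Y i = C *ᵥ (∑ i, (a i - m)) := (mulVec_sum' Finset.univ C _).symm
      rw [this, hsumU, Matrix.mulVec_zero]
    have hswap : ∑ i, ∑ j, (if G.Adj i j then ((Y i - Y j) ⬝ᵥ (Y i - Y j)) else 0)
        = ∑ c : Fin pp, ∑ i, ∑ j, (if G.Adj i j then (Y i c - Y j c)^2 else 0) := by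
      have e : ∀ i j : Fin N, (if G.Adj i j then ((Y i - Y j) ⬝ᵥ (Y i - Y j)) else 0)
          = ∑ c : Fin pp, (if G.Adj i j then (Y i c - Y j c)^2 else 0) := by
        intro i j
        by_cases hij : G.Adj i j
        · simp only [if_pos hij, dotProduct, Pi.sub_apply, pow_two]
        · simp only [if_neg hij, Finset.sum_const_zero]
      rw [Finset.sum_congr rfl fun i _ => Finset.sum_congr rfl fun j _ => e i j]
      exact (Finset.sum_congr rfl fun i _ => Finset.sum_comm).trans Finset.sum_comm
    have hQ2 : ∑ i, (Y i ⬝ᵥ Y i) = ∑ c : Fin pp, ∑ i, (Y i c)^2 := by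
      rw [Finset.sum_comm]
      refine Finset.sum_congr rfl fun i _ => ?_
      simp only [dotProduct, pow_two]
    rw [hswap, hQ2, Finset.mul_sum]
    refine Finset.sum_le_sum fun c _ => ?_
    set w : Fin N → ℝ := fun i => Y i c with hw
    have hw0 : ∑ i, w i = 0 := by
      have h := congrFun hYsum c
      rw [Finset.sum_apply] at h
      simpa using h
    have gap := spectral_gap G hG lam2 hlam_min w hw0
    have lap : ∑ i, ∑ j, (if G.Adj i j then (w i - w j)^2 else 0)
        = 2 * (w ⬝ᵥ (G.lapMatrix ℝ *ᵥ w)) := by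
      have h1 := SimpleGraph.lapMatrix_toLinearMap₂' ℝ G w
      rw [Matrix.toLinearMap₂'_apply'] at h1
      rw [h1]
      ring
    have hww : ∑ i, (w i)^2 = w ⬝ᵥ w := by simp [dotProduct, pow_two]
    calc 2 * lam2 * ∑ i, (Y i c)^2 = 2 * (lam2 * (w ⬝ᵥ w)) := by rw [← hww]; ring
      _ ≤ 2 * (w ⬝ᵥ (G.lapMatrix ℝ *ᵥ w)) := by linarith
      _ = ∑ i, ∑ j, (if G.Adj i j then (w i - w j)^2 else 0) := lap.symm
  -- Step 7 : assemble
  have hKsplit : ∑ i, ∑ j, (if G.Adj i j then (κ i j - kstar) * ((Y i - Y j) ⬝ᵥ (Y i - Y j)) else 0)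
      = ∑ i, ∑ j, (if G.Adj i j then κ i j * ((Y i - Y j) ⬝ᵥ (Y i - Y j)) else 0)
        - kstar * ∑ i, ∑ j, (if G.Adj i j then ((Y i - Y j) ⬝ᵥ (Y i - Y j)) else 0) := by
    rw [Finset.mul_sum]
    rw [← Finset.sum_sub_distrib]
    refine Finset.sum_congr rfl fun i _ => ?_
    rw [Finset.mul_sum, ← Finset.sum_sub_distrib]
    refine Finset.sum_congr rfl fun j _ => ?_
    by_cases hij : G.Adj i j
    · simp only [if_pos hij]; ring
    · simp only [if_neg hij]; ring
  have hQnn : 0 ≤ ∑ i, (Y i ⬝ᵥ Y i) :=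
    Finset.sum_nonneg fun i _ => Finset.sum_nonneg fun c _ => mul_self_nonneg _
  rw [hS1, hS2, hKt, hKsplit]
  have hcoup' := hcoup
  have hbound : kstar * (2 * lam2 * ∑ i, (Y i ⬝ᵥ Y i))
      ≤ kstar * ∑ i, ∑ j, (if G.Adj i j then ((Y i - Y j) ⬝ᵥ (Y i - Y j)) else 0) :=
    mul_le_mul_of_nonneg_left hQ (le_of_lt hkstar_pos)
  have hθQ : θ * ∑ i, (Y i ⬝ᵥ Y i) ≤ 2 * kstar * lam2 * ∑ i, (Y i ⬝ᵥ Y i) :=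
    mul_le_mul_of_nonneg_right hkb hQnn
  nlinarith [hfb, hcoup', hbound, hθQ]

/-- Uniform boundedness of the deviations from the Lyapunov function:
for the adaptively coupled system under Assumption (OFP) with states in `X` on `[0,T)`,
and any `k*` with `2 k* λ₂ > θ` (λ₂ the second-smallest Laplacian eigenvalue),
`∑ᵢ x̃ᵢ(t)ᵀ P x̃ᵢ(t) ≤ V(0)` for all `t ∈ [0,T)`, where
`V(0) = ∑ᵢ x̃ᵢ(0)ᵀ P x̃ᵢ(0) + ∑ᵢ∑ⱼ (1/(2γᵢⱼ)) (kᵢⱼ(0) - k*ᵢⱼ)²`. -/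
theorem deviations_bounded_by_initial_lyapunov
    {n p N : ℕ}
    (G : SimpleGraph (Fin N)) [DecidableRel G.Adj] (hG : G.Connected)
    (f : (Fin n → ℝ) → (Fin n → ℝ))
    (J : (Fin n → ℝ) → Matrix (Fin n) (Fin n) ℝ)
    (hf : ∀ z, HasFDerivAt f ((J z).mulVecLin.toContinuousLinearMap) z)
    (hJcont : Continuous J)
    (B : Matrix (Fin n) (Fin p) ℝ) (C : Matrix (Fin p) (Fin n) ℝ)
    -- Assumption (OFP)
    (X : Set (Fin n → ℝ)) (hX : Convex ℝ X)
    (θ : ℝ) (hθ : 0 < θ)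
    (P : Matrix (Fin n) (Fin n) ℝ) (hP : P.PosDef)
    (hLMI : ∀ z ∈ X, ∀ v : Fin n → ℝ,
      v ⬝ᵥ ((P * J z + (J z)ᵀ * P) *ᵥ v) ≤ θ * ((C *ᵥ v) ⬝ᵥ (C *ᵥ v)))
    (hPB : P * B = Cᵀ)
    -- `lam2` is the second-smallest eigenvalue of the Laplacian of `G`:
    (lam2 : ℝ)
    (hlam_eig : ∃ v : Fin N → ℝ, v ≠ 0 ∧ (G.lapMatrix ℝ) *ᵥ v = lam2 • v)
    (hlam_min : ∀ μ : ℝ, (∃ v : Fin N → ℝ, v ≠ 0 ∧ (G.lapMatrix ℝ) *ᵥ v = μ • v) →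
      μ = 0 ∨ lam2 ≤ μ)
    -- the constant `k*` with `2 k* λ₂ > θ`
    (kstar : ℝ) (hkstar : θ < 2 * kstar * lam2)
    -- a continuously differentiable solution of the adaptively coupled system on `[0,T)`
    (T : ℝ)
    (x : Fin N → ℝ → (Fin n → ℝ)) (k : Fin N → Fin N → ℝ → ℝ)
    (γ : Fin N → Fin N → ℝ)
    (hγsym : ∀ i j, γ i j = γ j i)
    (hγpos : ∀ i j, G.Adj i j → 0 < γ i j)
    (hksym : ∀ i j t, k i j t = k j i t)
    (hknonadj : ∀ i j, ¬ G.Adj i j → ∀ t, k i j t = 0)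
    (hxode : ∀ i, ∀ t, 0 ≤ t → t < T →
      HasDerivAt (x i)
        (f (x i t) + B *ᵥ (∑ j, k i j t • (C *ᵥ x j t - C *ᵥ x i t))) t)
    (hkode : ∀ i j, G.Adj i j → ∀ t, 0 ≤ t → t < T →
      HasDerivAt (k i j)
        (γ i j * ((C *ᵥ x i t - C *ᵥ x j t) ⬝ᵥ (C *ᵥ x i t - C *ᵥ x j t))) t)
    (hXinv : ∀ i, ∀ t, 0 ≤ t → t < T → x i t ∈ X) :
    -- conclusion: the quadratic deviation term stays below the initial Lyapunov value
    ∀ t, 0 ≤ t → t < T →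
      ∑ i, ((x i t - (N : ℝ)⁻¹ • ∑ j, x j t) ⬝ᵥ
          (P *ᵥ (x i t - (N : ℝ)⁻¹ • ∑ j, x j t))) ≤
        (∑ i, ((x i 0 - (N : ℝ)⁻¹ • ∑ j, x j 0) ⬝ᵥ
          (P *ᵥ (x i 0 - (N : ℝ)⁻¹ • ∑ j, x j 0)))) +
        ∑ i, ∑ j, (1 / (2 * γ i j)) *
          (k i j 0 - (if G.Adj i j then kstar else 0)) ^ 2 := by
  intro t ht0 htT
  have hPsym : Pᵀ = P := by
    have h : Pᴴ = P := hP.isHermitian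
    rwa [Matrix.conjTranspose_eq_transpose_of_trivial] at h
  -- positivity of lam2 and kstar
  obtain ⟨v, hv0, hveq⟩ := hlam_eig
  have hvv : 0 < v ⬝ᵥ v := by
    rcases Function.ne_iff.mp hv0 with ⟨i, hi⟩
    refine Finset.sum_pos' (fun i _ => mul_self_nonneg _)
      ⟨i, Finset.mem_univ i, mul_self_pos.mpr (by simpa using hi)⟩
  have hlamnn : 0 ≤ lam2 := by
    have hle := (SimpleGraph.posSemidef_lapMatrix ℝ G).dotProduct_mulVec_nonneg v
    rw [star_trivial, hveq, dotProduct_smul, smul_eq_mul] at hle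
    nlinarith
  have hlam2pos : 0 < lam2 := by
    rcases lt_or_eq_of_le hlamnn with h | h
    · exact h
    · exfalso
      have h2 := hkstar
      rw [← h] at h2
      simp at h2
      linarith
  have hkpos : 0 < kstar := by nlinarith
  -- Lyapunov function and its derivative
  set V : ℝ → ℝ := fun s =>
    (∑ i, ((x i s - (N : ℝ)⁻¹ • ∑ j, x j s) ⬝ᵥ
        (P *ᵥ (x i s - (N : ℝ)⁻¹ • ∑ j, x j s)))) +
      ∑ i, ∑ j, (1 / (2 * γ i j)) *
        (k i j s - (if G.Adj i j then kstar else 0)) ^ 2 with hVdef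
  set Vd : ℝ → ℝ := fun s =>
    (∑ i, (((f (x i s) + B *ᵥ (∑ j, k i j s • (C *ᵥ x j s - C *ᵥ x i s)))
            - (N:ℝ)⁻¹ • ∑ j, (f (x j s) + B *ᵥ (∑ l, k j l s • (C *ᵥ x l s - C *ᵥ x j s))))
          ⬝ᵥ (P *ᵥ (x i s - (N:ℝ)⁻¹ • ∑ j, x j s))
        + (x i s - (N:ℝ)⁻¹ • ∑ j, x j s) ⬝ᵥ
          (P *ᵥ ((f (x i s) + B *ᵥ (∑ j, k i j s • (C *ᵥ x j s - C *ᵥ x i s)))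
            - (N:ℝ)⁻¹ • ∑ j, (f (x j s) + B *ᵥ (∑ l, k j l s • (C *ᵥ x l s - C *ᵥ x j s)))))))
    + ∑ i, ∑ j, (if G.Adj i j then
        (1/(2*γ i j)) * (2 * (k i j s - kstar) *
          (γ i j * ((C *ᵥ x i s - C *ᵥ x j s) ⬝ᵥ (C *ᵥ x i s - C *ᵥ x j s))))
      else 0) with hVddef
  have hVderiv : ∀ s, 0 ≤ s → s < T → HasDerivAt V (Vd s) s := by
    intro s hs0 hsT
    have hx' : ∀ i, HasDerivAt (x i)
        (f (x i s) + B *ᵥ (∑ j, k i j s • (C *ᵥ x j s - C *ᵥ x i s))) s :=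
      fun i => hxode i s hs0 hsT
    have hsum' : HasDerivAt (fun r => ∑ j, x j r)
        (∑ j, (f (x j s) + B *ᵥ (∑ l, k j l s • (C *ᵥ x l s - C *ᵥ x j s)))) s :=
      HasDerivAt.fun_sum (fun j _ => hx' j)
    have hu' : ∀ i, HasDerivAt (fun r => x i r - (N:ℝ)⁻¹ • ∑ j, x j r)
        ((f (x i s) + B *ᵥ (∑ j, k i j s • (C *ᵥ x j s - C *ᵥ x i s)))
          - (N:ℝ)⁻¹ • ∑ j, (f (x j s) + B *ᵥ (∑ l, k j l s • (C *ᵥ x l s - C *ᵥ x j s)))) s :=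
      fun i => (hx' i).fun_sub (hsum'.fun_const_smul _)
    have h1 : HasDerivAt (fun r => ∑ i, ((x i r - (N : ℝ)⁻¹ • ∑ j, x j r) ⬝ᵥ
        (P *ᵥ (x i r - (N : ℝ)⁻¹ • ∑ j, x j r))))
        (∑ i, (((f (x i s) + B *ᵥ (∑ j, k i j s • (C *ᵥ x j s - C *ᵥ x i s)))
            - (N:ℝ)⁻¹ • ∑ j, (f (x j s) + B *ᵥ (∑ l, k j l s • (C *ᵥ x l s - C *ᵥ x j s))))
          ⬝ᵥ (P *ᵥ (x i s - (N:ℝ)⁻¹ • ∑ j, x j s))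
        + (x i s - (N:ℝ)⁻¹ • ∑ j, x j s) ⬝ᵥ
          (P *ᵥ ((f (x i s) + B *ᵥ (∑ j, k i j s • (C *ᵥ x j s - C *ᵥ x i s)))
            - (N:ℝ)⁻¹ • ∑ j, (f (x j s) + B *ᵥ (∑ l, k j l s • (C *ᵥ x l s - C *ᵥ x j s))))))) s :=
      HasDerivAt.fun_sum fun i _ => hasDerivAt_quad P (hu' i)
    have h2 : ∀ i j : Fin N, HasDerivAt
        (fun r => (1 / (2 * γ i j)) * (k i j r - (if G.Adj i j then kstar else 0)) ^ 2)
        (if G.Adj i j then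
          (1/(2*γ i j)) * (2 * (k i j s - kstar) *
            (γ i j * ((C *ᵥ x i s - C *ᵥ x j s) ⬝ᵥ (C *ᵥ x i s - C *ᵥ x j s))))
        else 0) s := by
      intro i j
      by_cases hij : G.Adj i j
      · rw [if_pos hij, if_pos hij]
        have h := (((hkode i j hij s hs0 hsT).sub_const kstar).pow 2).const_mul (1 / (2 * γ i j))
        simpa using h
      · rw [if_neg hij, if_neg hij]
        have hfun : (fun r => (1 / (2 * γ i j)) * (k i j r - 0) ^ 2)
            = fun _ => (1 / (2 * γ i j)) * ((0:ℝ) - 0) ^ 2 := by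
          funext r
          rw [hknonadj i j hij r]
        rw [hfun]
        exact hasDerivAt_const s _
    exact h1.fun_add (HasDerivAt.fun_sum fun i _ => HasDerivAt.fun_sum fun j _ => h2 i j)
  have keyineq : ∀ s, 0 ≤ s → s < T → Vd s ≤ 0 := by
    intro s hs0 hsT
    have h := deriv_nonpos G hG f J hf B C X hX θ hθ P hPsym hLMI hPB lam2 hlam_min
      kstar hkpos (le_of_lt hkstar) γ hγpos
      (fun i => x i s) (fun i => hXinv i s hs0 hsT)
      (fun i j => k i j s) (fun i j => hksym i j s)
      (fun i j hij => hknonadj i j hij s)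
      (fun i => f (x i s) + B *ᵥ (∑ j, k i j s • (C *ᵥ x j s - C *ᵥ x i s)))
      (fun i => rfl)
    exact h
  have hmono : V t ≤ V 0 := by
    rcases eq_or_lt_of_le ht0 with rfl | ht0'
    · exact le_refl _
    · have hanti : AntitoneOn V (Set.Icc 0 t) := by
        apply antitoneOn_of_deriv_nonpos (convex_Icc 0 t)
        · intro s hs
          exact ((hVderiv s hs.1 (lt_of_le_of_lt hs.2 htT)).continuousAt).continuousWithinAt
        · intro s hs
          rw [interior_Icc] at hs
          exact (hVderiv s (le_of_lt hs.1)
            (lt_trans hs.2 htT)).differentiableAt.differentiableWithinAt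
        · intro s hs
          rw [interior_Icc] at hs
          rw [(hVderiv s (le_of_lt hs.1) (lt_trans hs.2 htT)).deriv]
          exact keyineq s (le_of_lt hs.1) (lt_trans hs.2 htT)
      exact hanti (Set.left_mem_Icc.mpr ht0) (Set.right_mem_Icc.mpr ht0) ht0
  have hposk : 0 ≤ ∑ i, ∑ j, (1 / (2 * γ i j)) *
      (k i j t - (if G.Adj i j then kstar else 0)) ^ 2 := by
    refine Finset.sum_nonneg fun i _ => Finset.sum_nonneg fun j _ => ?_
    by_cases hij : G.Adj i j
    · have := hγpos i j hij
      positivity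
    · rw [if_neg hij, hknonadj i j hij t]
      simp
  have hVt : V t = (∑ i, ((x i t - (N : ℝ)⁻¹ • ∑ j, x j t) ⬝ᵥ
        (P *ᵥ (x i t - (N : ℝ)⁻¹ • ∑ j, x j t)))) +
      ∑ i, ∑ j, (1 / (2 * γ i j)) *
        (k i j t - (if G.Adj i j then kstar else 0)) ^ 2 := rfl
  have hV0 : V 0 = (∑ i, ((x i 0 - (N : ℝ)⁻¹ • ∑ j, x j 0) ⬝ᵥ
        (P *ᵥ (x i 0 - (N : ℝ)⁻¹ • ∑ j, x j 0)))) +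
      ∑ i, ∑ j, (1 / (2 * γ i j)) *
        (k i j 0 - (if G.Adj i j then kstar else 0)) ^ 2 := rfl
  have h1 : (∑ i, ((x i t - (N : ℝ)⁻¹ • ∑ j, x j t) ⬝ᵥ
        (P *ᵥ (x i t - (N : ℝ)⁻¹ • ∑ j, x j t)))) +
      ∑ i, ∑ j, (1 / (2 * γ i j)) *
        (k i j t - (if G.Adj i j then kstar else 0)) ^ 2 ≤
      (∑ i, ((x i 0 - (N : ℝ)⁻¹ • ∑ j, x j 0) ⬝ᵥ
        (P *ᵥ (x i 0 - (N : ℝ)⁻¹ • ∑ j, x j 0)))) +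
      ∑ i, ∑ j, (1 / (2 * γ i j)) *
        (k i j 0 - (if G.Adj i j then kstar else 0)) ^ 2 := by
    rw [← hVt, ← hV0]
    exact hmono
  exact le_trans (le_add_of_nonneg_right hposk) h1
end

section
/- Let f : ℝ → ℝ be given by f(x) = x − x³, let N ≥ 1, and let x̃₁,…,x̃_N : [0,∞) → ℝ be continuous functions with M := sup_{t ≥ 0} max_i |x̃ᵢ(t)| < ∞. If x̄ : [0,∞) → ℝ is differentiable and satisfies d/dt x̄(t) = (1/N)·∑_{i=1}^N f(x̄(t) + x̃ᵢ(t)) for all t ≥ 0, then |x̄(t)| ≤ max{ |x̄(0)|, 1 + M } for all t ≥ 0. -/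
/-- Bounded-input-bounded-state property of the average dynamics for the
bistable node dynamics `f(x) = x - x³`: if the deviations `x̃ᵢ` are continuous and uniformly
bounded by `M` on `[0,∞)` and `x̄` solves `x̄' = (1/N) ∑ᵢ f(x̄ + x̃ᵢ)`, then
`|x̄(t)| ≤ max {|x̄(0)|, 1 + M}` for all `t ≥ 0`. -/
theorem bistable_average_BIBS
    {N : ℕ} (hN : 1 ≤ N)
    (xt : Fin N → ℝ → ℝ) (hxtcont : ∀ i, Continuous (xt i))
    (M : ℝ) (hM : ∀ t : ℝ, 0 ≤ t → ∀ i, |xt i t| ≤ M)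
    (xbar : ℝ → ℝ)
    (hode : ∀ t : ℝ, 0 ≤ t →
      HasDerivAt xbar
        ((N : ℝ)⁻¹ * ∑ i, ((xbar t + xt i t) - (xbar t + xt i t) ^ 3)) t) :
    ∀ t : ℝ, 0 ≤ t → |xbar t| ≤ max |xbar 0| (1 + M) := by
  have hNR : (0:ℝ) < (N:ℝ) := by exact_mod_cast hN
  have i0 : Fin N := ⟨0, hN⟩
  have hM0 : 0 ≤ M := le_trans (abs_nonneg _) (hM 0 le_rfl i0)
  set B : ℝ := max |xbar 0| (1 + M) with hB
  have hB1M : 1 + M ≤ B := le_max_right _ _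
  have hB0 : 0 ≤ B := le_trans (by linarith) hB1M
  set g : ℝ → ℝ := fun u => xbar u ^ 2 with hgdef
  set g' : ℝ → ℝ := fun u =>
    2 * xbar u * ((N : ℝ)⁻¹ * ∑ i, ((xbar u + xt i u) - (xbar u + xt i u) ^ 3)) with hg'def
  have hg : ∀ u : ℝ, 0 ≤ u → HasDerivAt g (g' u) u := by
    intro u hu
    have h : HasDerivAt (fun x => xbar x ^ 2) _ u := (hode u hu).fun_pow 2
    convert h using 1
    simp only [hg'def]
    push_cast
    ring
  have hkey : ∀ u : ℝ, 0 ≤ u → 1 + M < |xbar u| → g' u < 0 := by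
    intro u hu hlt
    have hsum : xbar u * ∑ i, ((xbar u + xt i u) - (xbar u + xt i u) ^ 3) < 0 := by
      rw [Finset.mul_sum]
      apply Finset.sum_neg
      · intro i _
        have hd' := abs_le.1 (hM u hu i)
        rcases le_or_gt 0 (xbar u) with h | h
        · rw [abs_of_nonneg h] at hlt
          have hy : 1 < xbar u + xt i u := by linarith
          have hp := mul_pos (mul_pos (show (0:ℝ) < xbar u by linarith)
            (show (0:ℝ) < xbar u + xt i u by linarith))
            (mul_pos (show (0:ℝ) < (xbar u + xt i u) - 1 by linarith)
              (show (0:ℝ) < (xbar u + xt i u) + 1 by linarith))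
          nlinarith [hp]
        · rw [abs_of_neg h] at hlt
          have hy : xbar u + xt i u < -1 := by linarith
          have hp := mul_pos (mul_pos (show (0:ℝ) < -xbar u by linarith)
            (show (0:ℝ) < -(xbar u + xt i u) by linarith))
            (mul_pos (show (0:ℝ) < -(xbar u + xt i u) - 1 by linarith)
              (show (0:ℝ) < -(xbar u + xt i u) + 1 by linarith))
          nlinarith [hp]
      · exact ⟨i0, Finset.mem_univ _⟩
    have h2 : (0:ℝ) < 2 * (N:ℝ)⁻¹ := by positivity
    have := mul_neg_of_pos_of_neg h2 hsum
    simp only [hg'def]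
    nlinarith [this]
  intro t ht
  by_contra hcon
  push_neg at hcon
  have hgt : B ^ 2 < g t := by
    simp only [hgdef]
    calc B ^ 2 < |xbar t| ^ 2 := by
          exact pow_lt_pow_left₀ hcon hB0 (by norm_num)
      _ = xbar t ^ 2 := sq_abs _
  have hg0 : g 0 ≤ B ^ 2 := by
    simp only [hgdef]
    calc xbar 0 ^ 2 = |xbar 0| ^ 2 := (sq_abs _).symm
      _ ≤ B ^ 2 := pow_le_pow_left₀ (abs_nonneg _) (le_max_left _ _) 2
  have ht0 : 0 < t := by
    rcases eq_or_lt_of_le ht with h | h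
    · exfalso; rw [← h] at hgt; linarith
    · exact h
  -- the exit set
  set S : Set ℝ := {u | u ∈ Set.Icc (0:ℝ) t ∧ g u ≤ B ^ 2} with hSdef
  have hS_ne : S.Nonempty := ⟨0, ⟨le_rfl, le_of_lt ht0⟩, hg0⟩
  have hS_bdd : BddAbove S := ⟨t, fun u hu => hu.1.2⟩
  have hgcont : ∀ u : ℝ, 0 ≤ u → ContinuousAt g u := fun u hu => (hg u hu).continuousAt
  have hS_closed : IsClosed S := by
    rw [← isSeqClosed_iff_isClosed]
    intro u l hu hul
    have hl1 : l ∈ Set.Icc (0:ℝ) t := by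
      have : IsClosed (Set.Icc (0:ℝ) t) := isClosed_Icc
      exact (isSeqClosed_iff_isClosed.mpr this) (fun n => (hu n).1) hul
    refine ⟨hl1, ?_⟩
    have : Filter.Tendsto (g ∘ u) Filter.atTop (nhds (g l)) :=
      ((hgcont l hl1.1).tendsto).comp hul
    exact le_of_tendsto this (Filter.Eventually.of_forall fun n => (hu n).2)
  set s : ℝ := sSup S with hsdef
  have hs_mem : s ∈ S := hS_closed.csSup_mem hS_ne hS_bdd
  have hs_le_t : s ≤ t := hs_mem.1.2
  have hs0 : 0 ≤ s := hs_mem.1.1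
  have hs_lt_t : s < t := by
    rcases eq_or_lt_of_le hs_le_t with h | h
    · exfalso; rw [h] at hs_mem; linarith [hs_mem.2]
    · exact h
  have habove : ∀ u : ℝ, s < u → u ≤ t → B ^ 2 < g u := by
    intro u hsu hut
    by_contra hle
    push_neg at hle
    have : u ∈ S := ⟨⟨le_trans hs0 (le_of_lt hsu), hut⟩, hle⟩
    exact absurd (le_csSup hS_bdd this) (not_le.mpr hsu)
  -- on (s, t], g' < 0
  have hneg : ∀ u : ℝ, s < u → u ≤ t → g' u < 0 := by
    intro u hsu hut
    have hu0 : 0 ≤ u := le_trans hs0 (le_of_lt hsu)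
    apply hkey u hu0
    have h1 : (1 + M) ^ 2 < g u := lt_of_le_of_lt (pow_le_pow_left₀ (by linarith) hB1M 2) (habove u hsu hut)
    have : (1 + M) ^ 2 < |xbar u| ^ 2 := by rw [sq_abs]; exact h1
    exact lt_of_pow_lt_pow_left₀ 2 (abs_nonneg _) this
  -- MVT: for s' ∈ (s, t), g t < g s'
  have hmvt : ∀ s' : ℝ, s < s' → s' < t → g t < g s' := by
    intro s' hss' hs't
    have hs'0 : 0 ≤ s' := le_trans hs0 (le_of_lt hss')
    have hcontOn : ContinuousOn g (Set.Icc s' t) := fun u hu =>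
      (hgcont u (le_trans hs'0 hu.1)).continuousWithinAt
    have hderivOn : ∀ u ∈ Set.Ioo s' t, HasDerivAt g (g' u) u := fun u hu =>
      hg u (le_trans hs'0 (le_of_lt hu.1))
    obtain ⟨c, hc, hceq⟩ := exists_hasDerivAt_eq_slope g g' hs't hcontOn hderivOn
    have hc' : g' c < 0 := hneg c (lt_trans hss' hc.1) (le_of_lt hc.2)
    rw [hceq] at hc'
    have hpos : 0 < t - s' := by linarith
    have := div_neg_iff.mp hc'
    rcases this with ⟨h1, h2⟩ | ⟨h1, h2⟩
    · linarith
    · linarith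
  -- limit as s' → s⁺ gives g t ≤ g s ≤ B², contradiction
  have htend : Filter.Tendsto g (nhdsWithin s (Set.Ioi s)) (nhds (g s)) :=
    ((hgcont s hs0).continuousWithinAt).tendsto
  have hev : ∀ᶠ s' in nhdsWithin s (Set.Ioi s), g t ≤ g s' := by
    filter_upwards [Ioo_mem_nhdsGT_of_mem ⟨le_refl s, hs_lt_t⟩] with s' hs'
    exact le_of_lt (hmvt s' hs'.1 hs'.2)
  have : g t ≤ g s := ge_of_tendsto htend hev
  linarith [hs_mem.2, hgt]
end
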